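/- Let F be a Banach space with FDD (F_i) of constant K and let Θ ↘ 0. Then there is Γ ↘ 0 (e.g., with 12K² Σ_{i≥m} γ_i < θ_m and γ_m < λ_m for a suitable perturbation sequence Λ) such that for all M ↗ ∞, every M-separated Γ-block sequence (x_i) in E is a normalised basic sequence, and every normalised block sequence of (x_i) is an M-separated Θ-block sequence. -/

import Mathlib

open Filter Topology

noncomputable section

structure SchauderBasis' (X : Type*) [NormedAddCommGroup X] [NormedSpace ℝ X] where
  e : ℕ → X
  coord : ℕ → X →L[ℝ] ℝ
  biorth : ∀ n m, coord n (e m) = if n = m then 1 else 0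
  expansion : ∀ x : X,
    Filter.Tendsto (fun N => ∑ n ∈ Finset.range N, coord n x • e n) Filter.atTop (nhds x)
  normalised : ∀ n, ‖e n‖ = 1

section Defs

variable {X Y : Type*} [NormedAddCommGroup X] [NormedSpace ℝ X]
  [NormedAddCommGroup Y] [NormedSpace ℝ Y]

/-- Convergence of the series `∑ x n` (of partial sums). -/
def Converges (x : ℕ → X) : Prop :=
  ∃ s, Filter.Tendsto (fun N => ∑ n ∈ Finset.range N, x n) Filter.atTop (nhds s)

/-- Two sequences are equivalent if the same scalar series converge. -/
def SeqEquiv (x : ℕ → X) (y : ℕ → Y) : Prop :=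
  ∀ a : ℕ → ℝ, Converges (fun n => a n • x n) ↔ Converges (fun n => a n • y n)

/-- `C`-equivalence of two sequences. -/
def CEquiv (C : ℝ) (x : ℕ → X) (y : ℕ → Y) : Prop :=
  ∀ (a : ℕ → ℝ) (N : ℕ),
    C⁻¹ * ‖∑ n ∈ Finset.range N, a n • y n‖ ≤ ‖∑ n ∈ Finset.range N, a n • x n‖ ∧
    ‖∑ n ∈ Finset.range N, a n • x n‖ ≤ C * ‖∑ n ∈ Finset.range N, a n • y n‖

/-- A basic sequence: uniformly bounded partial-sum projections. -/
def IsBasicSeq (x : ℕ → X) : Prop :=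
  ∃ K, 1 ≤ K ∧ ∀ (a : ℕ → ℝ) (m n : ℕ), m ≤ n →
    ‖∑ i ∈ Finset.range m, a i • x i‖ ≤ K * ‖∑ i ∈ Finset.range n, a i • x i‖

/-- A sequence of signs. -/
def IsSigns (θ : ℕ → ℝ) : Prop := ∀ n, θ n = 1 ∨ θ n = -1

end Defs

namespace SchauderBasis'

variable {X : Type*} [NormedAddCommGroup X] [NormedSpace ℝ X] (b : SchauderBasis' X)

/-- Support of a vector with respect to the basis. -/
def supp (x : X) : Set ℕ := {n | b.coord n x ≠ 0}

/-- A normalised block sequence of the basis. -/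
def IsBlockSeq (x : ℕ → X) : Prop :=
  (∀ n, ‖x n‖ = 1) ∧ (∀ n, (b.supp (x n)).Finite) ∧
  ∀ n, ∀ i ∈ b.supp (x n), ∀ j ∈ b.supp (x (n+1)), i < j

/-- Unconditionality of the basis. -/
def Unconditional : Prop :=
  ∀ θ : ℕ → ℝ, IsSigns θ → SeqEquiv (fun n => θ n • b.e n) b.e

/-- 1-unconditionality (finite-sum form). -/
def OneUnconditional : Prop :=
  ∀ (θ a : ℕ → ℝ), IsSigns θ → ∀ N,
    ‖∑ n ∈ Finset.range N, (θ n * a n) • b.e n‖ ≤ ‖∑ n ∈ Finset.range N, a n • b.e n‖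

/-- The shift property: every normalised block sequence is equivalent to its shift. -/
def ShiftProperty : Prop :=
  ∀ x : ℕ → X, b.IsBlockSeq x → SeqEquiv x (fun n => x (n+1))

/-- The basis is shrinking. -/
def Shrinking : Prop :=
  ∀ f : X →L[ℝ] ℝ, Filter.Tendsto
    (fun n => sSup ((fun y => |f y|) ''
      {y | y ∈ Submodule.span ℝ (Set.range fun i => b.e (n + i)) ∧ ‖y‖ ≤ 1}))
    Filter.atTop (nhds 0)

/-- The basis is boundedly complete. -/
def BoundedlyComplete : Prop :=
  ∀ a : ℕ → ℝ, (∃ M, ∀ N, ‖∑ i ∈ Finset.range N, a i • b.e i‖ ≤ M) →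
    Converges (fun i => a i • b.e i)

end SchauderBasis'
/-- A finite-dimensional decomposition of `F`, given by its coordinate projections. -/
structure FDD (F : Type*) [NormedAddCommGroup F] [NormedSpace ℝ F] where
  Q : ℕ → F →L[ℝ] F
  idem : ∀ i x, Q i (Q i x) = Q i x
  orth : ∀ i j, i ≠ j → ∀ x, Q i (Q j x) = 0
  findim : ∀ i, FiniteDimensional ℝ (LinearMap.range ((Q i).toLinearMap))
  expansion : ∀ x,
    Filter.Tendsto (fun N => ∑ i ∈ Finset.range N, Q i x) Filter.atTop (nhds x)

namespace FDD

variable {F : Type*} [NormedAddCommGroup F] [NormedSpace ℝ F] (d : FDD F)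

/-- Projection onto a finite set of coordinates. -/
def proj (I : Finset ℕ) : F →L[ℝ] F := ∑ i ∈ I, d.Q i

/-- `K` is a constant for the decomposition. -/
def HasConstant (K : ℝ) : Prop :=
  1 ≤ K ∧ ∀ (x : F) (N : ℕ), ‖∑ i ∈ Finset.range N, d.Q i x‖ ≤ K * ‖x‖

/-- A `Δ`-block sequence of the decomposition, lying in `E`. -/
def DeltaBlock (E : Set F) (δ : ℕ → ℝ) (x : ℕ → F) : Prop :=
  (∀ i, x i ∈ E) ∧ (∀ i, ‖x i‖ = 1) ∧
  ∃ l r : ℕ → ℕ, (∀ i, l i ≤ r i) ∧ (∀ i, r i < l (i+1)) ∧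
    ∀ i, ‖d.proj (Finset.Icc (l i) (r i)) (x i) - x i‖ < δ i

/-- An `M`-separated `Δ`-block sequence of the decomposition, lying in `E`. -/
def MSepDeltaBlock (E : Set F) (δ : ℕ → ℝ) (M : ℕ → ℕ) (x : ℕ → F) : Prop :=
  (∀ i, x i ∈ E) ∧ (∀ i, ‖x i‖ = 1) ∧
  ∃ l r : ℕ → ℕ, (∀ i, l i ≤ r i) ∧ (∀ i, r i < l (i+1)) ∧
    (∀ i, ‖d.proj (Finset.Icc (l i) (r i)) (x i) - x i‖ < δ i) ∧
    M 0 < l 0 ∧ ∀ i, ∃ j, r i < M j ∧ M (j+1) < l (i+1)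

end FDD

/-- A decreasing null sequence of positive reals. -/
def NullSeq (δ : ℕ → ℝ) : Prop :=
  (∀ i, 0 < δ i) ∧ (∀ i, δ (i+1) ≤ δ i) ∧ Filter.Tendsto δ Filter.atTop (nhds 0)

/-- A normalised block sequence of the sequence `x`. -/
def IsBlockOf {F : Type*} [NormedAddCommGroup F] [NormedSpace ℝ F]
    (x z : ℕ → F) : Prop :=
  ∃ (p : ℕ → ℕ) (a : ℕ → ℝ), StrictMono p ∧
    (∀ k, z k = ∑ i ∈ Finset.Ico (p k) (p (k+1)), a i • x i) ∧ ∀ k, ‖z k‖ = 1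

section Aux

variable {F : Type*} [NormedAddCommGroup F] [NormedSpace ℝ F]

lemma aux_proj_proj (d : FDD F) (I J : Finset ℕ) (x : F) :
    d.proj I (d.proj J x) = d.proj (I ∩ J) x := by
  simp only [FDD.proj, ContinuousLinearMap.sum_apply, map_sum]
  rw [Finset.sum_comm]
  have h : ∀ i, ∑ j ∈ J, d.Q i (d.Q j x) = if i ∈ J then d.Q i x else 0 := by
    intro i
    by_cases hi : i ∈ J
    · rw [Finset.sum_eq_single_of_mem i hi]
      · simp [hi, d.idem]
      · intro j hj hne; exact d.orth i j (Ne.symm hne) x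
    · simp only [hi, if_false]
      exact Finset.sum_eq_zero fun j hj => d.orth i j (fun h => hi (h ▸ hj)) x
  calc ∑ i ∈ I, ∑ j ∈ J, d.Q i (d.Q j x)
      = ∑ i ∈ I, if i ∈ J then d.Q i x else 0 := Finset.sum_congr rfl fun i _ => h i
    _ = ∑ i ∈ I ∩ J, d.Q i x := Finset.sum_ite_mem I J _

lemma aux_proj_empty (d : FDD F) (x : F) : d.proj (∅ : Finset ℕ) x = 0 := by
  simp [FDD.proj]

lemma aux_geom_tail (m n : ℕ) :
    ∑ i ∈ Finset.Ico m n, ((1:ℝ)/2)^(i+2) ≤ (1/2)^(m+1) := by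
  rcases le_or_gt m n with hmn | hmn
  · rw [Finset.sum_Ico_eq_sum_range]
    calc ∑ i ∈ Finset.range (n - m), ((1:ℝ)/2)^(m + i + 2)
        = (1/2)^(m+2) * ∑ i ∈ Finset.range (n-m), ((1:ℝ)/2)^i := by
          rw [Finset.mul_sum]
          exact Finset.sum_congr rfl fun i _ => by ring
      _ ≤ (1/2)^(m+2) * 2 :=
          mul_le_mul_of_nonneg_left (sum_geometric_two_le _) (by positivity)
      _ = (1/2)^(m+1) := by ring
  · rw [Finset.Ico_eq_empty (by omega), Finset.sum_empty]; positivity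

end Aux

set_option maxHeartbeats 1600000 in
/-- Lemma `all blocks` -/
theorem all_blocks_lemma
    {F : Type*} [NormedAddCommGroup F] [NormedSpace ℝ F] [CompleteSpace F]
    (d : FDD F) (K : ℝ) (hK : d.HasConstant K)
    (hproj : ∀ (p q : ℕ) (z : F), ‖d.proj (Finset.Icc p q) z‖ ≤ 2 * K * ‖z‖)
    (E : Submodule ℝ F) (hEclosed : IsClosed (E : Set F))
    (Θ : ℕ → ℝ) (hΘ : NullSeq Θ) :
    ∃ γ : ℕ → ℝ, NullSeq γ ∧
      ∀ M : ℕ → ℕ, StrictMono M →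
        ∀ x : ℕ → F, d.MSepDeltaBlock (E : Set F) γ M x →
          IsBasicSeq x ∧
          ∀ z : ℕ → F, IsBlockOf x z → d.MSepDeltaBlock (E : Set F) Θ M z := by
  obtain ⟨hK1, hKproj⟩ := hK
  obtain ⟨hΘpos, hΘdec, hΘ0⟩ := hΘ
  have hΘanti : Antitone Θ := antitone_nat_of_succ_le hΘdec
  have hKpos : (0:ℝ) < K := lt_of_lt_of_le one_pos hK1
  set C : ℝ := 8*K*(2*K+1) with hCdef
  have hCpos : (0:ℝ) < C := by positivity
  have hC24 : 24 ≤ C := by nlinarith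
  clear_value C
  set γ : ℕ → ℝ := fun i => min (Θ i) 1 / C * (1/2)^(i+2) with hγdef
  have hγpos : ∀ i, 0 < γ i := by
    intro i
    have := hΘpos i
    have : 0 < min (Θ i) 1 := lt_min this one_pos
    positivity
  -- tail sum bound
  have htail : ∀ m n : ℕ, ∑ i ∈ Finset.Ico m n, γ i ≤ min (Θ m) 1 / C * (1/2)^(m+1) := by
    intro m n
    calc ∑ i ∈ Finset.Ico m n, γ i
        ≤ ∑ i ∈ Finset.Ico m n, min (Θ m) 1 / C * (1/2)^(i+2) := by
          apply Finset.sum_le_sum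
          intro i hi
          have him : m ≤ i := (Finset.mem_Ico.mp hi).1
          have hmin : min (Θ i) 1 ≤ min (Θ m) 1 := min_le_min (hΘanti him) le_rfl
          have hp : (0:ℝ) < (1/2:ℝ)^(i+2) := by positivity
          have : min (Θ i) 1 / C ≤ min (Θ m) 1 / C := by gcongr
          exact mul_le_mul_of_nonneg_right this hp.le
      _ = min (Θ m) 1 / C * ∑ i ∈ Finset.Ico m n, ((1:ℝ)/2)^(i+2) := by
          rw [Finset.mul_sum]
      _ ≤ min (Θ m) 1 / C * (1/2)^(m+1) := by
          apply mul_le_mul_of_nonneg_left (aux_geom_tail m n)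
          have := hΘpos m
          have : 0 < min (Θ m) 1 := lt_min this one_pos
          positivity
  -- crude bounds
  have hmin1 : ∀ m, min (Θ m) 1 ≤ 1 := fun m => min_le_right _ _
  have hminpos : ∀ m, 0 < min (Θ m) 1 := fun m => lt_min (hΘpos m) one_pos
  have htail' : ∀ m n : ℕ, ∑ i ∈ Finset.Ico m n, γ i ≤ 1 / (2*C) := by
    intro m n
    refine (htail m n).trans ?_
    have h1 : min (Θ m) 1 / C ≤ 1 / C := by gcongr; exact hmin1 m
    have h2 : ((1:ℝ)/2)^(m+1) ≤ 1/2 := by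
      calc ((1:ℝ)/2)^(m+1) ≤ (1/2)^1 := by
            apply pow_le_pow_of_le_one (by norm_num) (by norm_num); omega
        _ = 1/2 := by norm_num
    calc min (Θ m) 1 / C * (1/2)^(m+1) ≤ (1/C) * (1/2) := by
          apply mul_le_mul h1 h2 (by positivity) (by positivity)
      _ = 1 / (2*C) := by ring
  have hγhalf : ∀ i, γ i ≤ 1/2 := by
    intro i
    have h2 : ((1:ℝ)/2)^(i+2) ≤ 1 := by
      apply pow_le_one₀ (by norm_num) (by norm_num)
    calc γ i ≤ 1 / C * 1 := by
          apply mul_le_mul _ h2 (by positivity) (by positivity)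
          show min (Θ i) 1 / C ≤ 1 / C
          gcongr; exact hmin1 i
      _ ≤ 1/2 := by rw [mul_one]; rw [div_le_div_iff₀ hCpos (by norm_num)]; linarith
  refine ⟨γ, ⟨hγpos, ?_, ?_⟩, ?_⟩
  · -- decreasing
    intro i
    apply mul_le_mul
    · show min (Θ (i+1)) 1 / C ≤ min (Θ i) 1 / C
      gcongr
      exact hΘdec i
    · apply pow_le_pow_of_le_one (by norm_num) (by norm_num); omega
    · positivity
    · have := hminpos i; positivity
  · -- tendsto 0
    apply squeeze_zero (fun i => (hγpos i).le)
      (g := fun i => (1/C) * (1/2)^(i+2))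
    · intro i
      apply mul_le_mul_of_nonneg_right _ (by positivity)
      show min (Θ i) 1 / C ≤ 1 / C
      gcongr; exact hmin1 i
    · have h : Tendsto (fun n : ℕ => ((1:ℝ)/2)^n) atTop (nhds 0) :=
        tendsto_pow_atTop_nhds_zero_of_lt_one (by norm_num) (by norm_num)
      have := (h.comp (tendsto_add_atTop_nat 2)).const_mul (1/C)
      simpa [Function.comp, mul_zero] using this
  -- main part
  intro M hM x hx
  obtain ⟨hxE, hxnorm, l, r, hlr, hrl, hδ, hM0, hsep⟩ := hx
  set I : ℕ → Finset ℕ := fun i => Finset.Icc (l i) (r i) with hIdef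
  have hl_mono : StrictMono l :=
    strictMono_nat_of_lt_succ fun i => lt_of_le_of_lt (hlr i) (hrl i)
  have hr_mono : StrictMono r :=
    strictMono_nat_of_lt_succ fun i => lt_of_lt_of_le (hrl i) (hlr (i+1))
  have hrl' : ∀ i j, i < j → r i < l j := fun i j hij =>
    lt_of_lt_of_le (hrl i) (hl_mono.monotone hij)
  have hIdisj : ∀ i j, i ≠ j → I i ∩ I j = ∅ := by
    intro i j hij
    ext k
    simp only [hIdef, Finset.mem_inter, Finset.mem_Icc, Finset.notMem_empty, iff_false,
      not_and]
    rcases lt_or_gt_of_ne hij with h | h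
    · have := hrl' i j h
      omega
    · have := hrl' j i h
      omega
  have hδ' : ∀ i, ‖d.proj (I i) (x i) - x i‖ ≤ γ i := fun i => (hδ i).le
  -- small projection on other intervals
  have hsmall : ∀ i j, i ≠ j → ‖d.proj (I i) (x j)‖ ≤ 2*K*γ j := by
    intro i j hij
    have heq : d.proj (I i) (x j) = d.proj (I i) (x j - d.proj (I j) (x j)) := by
      rw [map_sub, aux_proj_proj, hIdisj i j hij, aux_proj_empty, sub_zero]
    rw [heq]
    calc ‖d.proj (I i) (x j - d.proj (I j) (x j))‖
        ≤ 2*K*‖x j - d.proj (I j) (x j)‖ := hproj _ _ _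
      _ ≤ 2*K*γ j := by
          rw [← norm_sub_rev]
          exact mul_le_mul_of_nonneg_left (hδ' j) (by positivity)
  -- absorption for large intervals : if I i ⊆ J (an Icc), proj J nearly fixes x i
  have habsorb : ∀ (i P Q' : ℕ), P ≤ l i → r i ≤ Q' →
      ‖d.proj (Finset.Icc P Q') (x i) - x i‖ ≤ (2*K+1) * γ i := by
    intro i P Q' hP hQ
    have hsub : Finset.Icc P Q' ∩ I i = I i := by
      rw [Finset.inter_eq_right]
      intro k hk
      simp only [hIdef, Finset.mem_Icc] at hk ⊢
      omega
    have heq : d.proj (Finset.Icc P Q') (x i) - x i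
        = d.proj (Finset.Icc P Q') (x i - d.proj (I i) (x i))
          - (x i - d.proj (I i) (x i)) := by
      rw [map_sub, aux_proj_proj, hsub]; abel
    rw [heq]
    calc ‖d.proj (Finset.Icc P Q') (x i - d.proj (I i) (x i)) - (x i - d.proj (I i) (x i))‖
        ≤ ‖d.proj (Finset.Icc P Q') (x i - d.proj (I i) (x i))‖
          + ‖x i - d.proj (I i) (x i)‖ := norm_sub_le _ _
      _ ≤ 2*K*‖x i - d.proj (I i) (x i)‖ + ‖x i - d.proj (I i) (x i)‖ :=
          add_le_add (hproj _ _ _) le_rfl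
      _ ≤ 2*K*γ i + γ i := by
          have h := hδ' i
          rw [norm_sub_rev] at h
          exact add_le_add (mul_le_mul_of_nonneg_left h (by positivity)) h
      _ = (2*K+1) * γ i := by ring
  -- annihilation for disjoint large intervals
  have hannih : ∀ (i P Q' : ℕ), Q' < l i →
      ‖d.proj (Finset.Icc P Q') (x i)‖ ≤ 2*K * γ i := by
    intro i P Q' hQ
    have hsub : Finset.Icc P Q' ∩ I i = ∅ := by
      ext k
      simp only [Finset.mem_inter, Finset.mem_Icc, Finset.notMem_empty, iff_false, not_and,
        hIdef]
      omega
    have heq : d.proj (Finset.Icc P Q') (x i)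
        = d.proj (Finset.Icc P Q') (x i - d.proj (I i) (x i)) := by
      rw [map_sub, aux_proj_proj, hsub, aux_proj_empty, sub_zero]
    rw [heq]
    calc ‖d.proj (Finset.Icc P Q') (x i - d.proj (I i) (x i))‖
        ≤ 2*K*‖x i - d.proj (I i) (x i)‖ := hproj _ _ _
      _ ≤ 2*K*γ i := by
          have h := hδ' i
          rw [norm_sub_rev] at h
          exact mul_le_mul_of_nonneg_left h (by positivity)
  -- coefficient bound
  have hcoeff : ∀ (a : ℕ → ℝ) (m n : ℕ), ∀ i ∈ Finset.Ico m n,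
      |a i| ≤ 8*K*‖∑ j ∈ Finset.Ico m n, a j • x j‖ := by
    intro a m n i hi
    set y := ∑ j ∈ Finset.Ico m n, a j • x j with hy
    obtain ⟨i₀, hi₀, hmax⟩ :=
      Finset.exists_max_image (Finset.Ico m n) (fun j => |a j|) ⟨i, hi⟩
    suffices h : |a i₀| ≤ 8*K*‖y‖ from le_trans (hmax i hi) h
    have hynn : (0:ℝ) ≤ ‖y‖ := norm_nonneg _
    have key : d.proj (I i₀) y = ∑ j ∈ Finset.Ico m n, a j • d.proj (I i₀) (x j) := by
      rw [hy, map_sum]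
      exact Finset.sum_congr rfl fun j _ => by rw [map_smul]
    have split : a i₀ • x i₀ = d.proj (I i₀) y
        - (∑ j ∈ (Finset.Ico m n).erase i₀, a j • d.proj (I i₀) (x j))
        - a i₀ • (d.proj (I i₀) (x i₀) - x i₀) := by
      rw [key, ← Finset.add_sum_erase _ _ hi₀, smul_sub]
      abel
    have hnorm1 : ‖∑ j ∈ (Finset.Ico m n).erase i₀, a j • d.proj (I i₀) (x j)‖
        ≤ |a i₀| * (2*K * ∑ j ∈ Finset.Ico m n, γ j) := by
      calc ‖∑ j ∈ (Finset.Ico m n).erase i₀, a j • d.proj (I i₀) (x j)‖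
          ≤ ∑ j ∈ (Finset.Ico m n).erase i₀, ‖a j • d.proj (I i₀) (x j)‖ :=
            norm_sum_le _ _
        _ ≤ ∑ j ∈ (Finset.Ico m n).erase i₀, |a i₀| * (2*K*γ j) := by
            apply Finset.sum_le_sum
            intro j hj
            rw [norm_smul, Real.norm_eq_abs]
            have hj' := Finset.mem_of_mem_erase hj
            have hne : i₀ ≠ j := fun h => (Finset.ne_of_mem_erase hj) h.symm
            exact mul_le_mul (hmax j hj') (hsmall i₀ j hne) (norm_nonneg _) (abs_nonneg _)
        _ ≤ ∑ j ∈ Finset.Ico m n, |a i₀| * (2*K*γ j) := by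
            apply Finset.sum_le_sum_of_subset_of_nonneg (Finset.erase_subset _ _)
            intro j _ _
            have := hγpos j
            positivity
        _ = |a i₀| * (2*K * ∑ j ∈ Finset.Ico m n, γ j) := by
            rw [Finset.mul_sum, Finset.mul_sum]
    have hsum14 : 2*K * ∑ j ∈ Finset.Ico m n, γ j ≤ 1/4 := by
      have h0 : (0:ℝ) ≤ 2*K := by positivity
      have h := mul_le_mul_of_nonneg_left (htail' m n) h0
      have heq : 2*K*(1/(2*C)) = K/C := by ring
      rw [heq] at h
      have hKC : K / C ≤ 1/4 := by
        rw [div_le_iff₀ hCpos]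
        nlinarith
      linarith
    have habs : |a i₀| = ‖a i₀ • x i₀‖ := by
      rw [norm_smul, Real.norm_eq_abs, hxnorm i₀, mul_one]
    have hineq : ‖a i₀ • x i₀‖ ≤ 2*K*‖y‖ + |a i₀| * (1/4) + |a i₀| * (1/2) := by
      rw [split]
      have h1 : ‖d.proj (I i₀) y‖ ≤ 2*K*‖y‖ := hproj _ _ _
      have h2 : ‖a i₀ • (d.proj (I i₀) (x i₀) - x i₀)‖ ≤ |a i₀| * (1/2) := by
        rw [norm_smul, Real.norm_eq_abs]
        exact mul_le_mul_of_nonneg_left ((hδ' i₀).trans (hγhalf i₀)) (abs_nonneg _)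
      have h3 : ‖∑ j ∈ (Finset.Ico m n).erase i₀, a j • d.proj (I i₀) (x j)‖
          ≤ |a i₀| * (1/4) :=
        hnorm1.trans (mul_le_mul_of_nonneg_left hsum14 (abs_nonneg _))
      calc ‖d.proj (I i₀) y - (∑ j ∈ (Finset.Ico m n).erase i₀, a j • d.proj (I i₀) (x j))
              - a i₀ • (d.proj (I i₀) (x i₀) - x i₀)‖
          ≤ ‖d.proj (I i₀) y - ∑ j ∈ (Finset.Ico m n).erase i₀, a j • d.proj (I i₀) (x j)‖
            + ‖a i₀ • (d.proj (I i₀) (x i₀) - x i₀)‖ := norm_sub_le _ _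
        _ ≤ ‖d.proj (I i₀) y‖
            + ‖∑ j ∈ (Finset.Ico m n).erase i₀, a j • d.proj (I i₀) (x j)‖
            + ‖a i₀ • (d.proj (I i₀) (x i₀) - x i₀)‖ :=
            add_le_add (norm_sub_le _ _) le_rfl
        _ ≤ 2*K*‖y‖ + |a i₀| * (1/4) + |a i₀| * (1/2) := by
            exact add_le_add (add_le_add h1 h3) h2
    rw [← habs] at hineq
    nlinarith [abs_nonneg (a i₀)]
  constructor
  · -- basic sequence
    refine ⟨3*K, by linarith, ?_⟩
    intro a m n hmn
    rcases Nat.eq_zero_or_pos m with hm0 | hmpos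
    · subst hm0
      simp only [Finset.range_zero, Finset.sum_empty, norm_zero]
      positivity
    obtain ⟨m', rfl⟩ : ∃ m', m = m' + 1 := ⟨m - 1, by omega⟩
    set Sn := ∑ i ∈ Finset.range n, a i • x i with hSn
    set Sm := ∑ i ∈ Finset.range (m'+1), a i • x i with hSm
    have hSnnn : (0:ℝ) ≤ ‖Sn‖ := norm_nonneg _
    have hcoeff' : ∀ i ∈ Finset.range n, |a i| ≤ 8*K*‖Sn‖ := by
      intro i hi
      rw [hSn, Finset.range_eq_Ico]
      exact hcoeff a 0 n i (by simp [Finset.mem_Ico, Finset.mem_range.mp hi])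
    set P := d.proj (Finset.Icc 0 (r m')) with hPdef
    have hPSn : ‖P Sn‖ ≤ 2*K*‖Sn‖ := hproj _ _ _
    have hPlin : P Sn = ∑ i ∈ Finset.range n, a i • P (x i) := by
      rw [hSn, map_sum]; exact Finset.sum_congr rfl fun i _ => by rw [map_smul]
    have hGsum : ∑ i ∈ Finset.range n, γ i ≤ 1/(2*C) := by
      rw [Finset.range_eq_Ico]; exact htail' 0 n
    have hCGsum : C * ∑ i ∈ Finset.range n, γ i ≤ 1/2 := by
      have h := mul_le_mul_of_nonneg_left hGsum hCpos.le
      have heq : C * (1/(2*C)) = 1/2 := by field_simp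
      rw [heq] at h; exact h
    have hdiff : ‖Sm - P Sn‖ ≤ (1/2) * ‖Sn‖ := by
      have hSm' : Sm = ∑ i ∈ Finset.range n,
          (if i ∈ Finset.range (m'+1) then a i • x i else 0) := by
        rw [Finset.sum_ite_mem,
          Finset.inter_eq_right.mpr (Finset.range_subset_range.mpr hmn)]
      have hsplit : Sm - P Sn = ∑ i ∈ Finset.range n,
          ((if i ∈ Finset.range (m'+1) then a i • x i else 0) - a i • P (x i)) := by
        rw [hSm', hPlin, ← Finset.sum_sub_distrib]
      rw [hsplit]
      have hterm : ∀ i ∈ Finset.range n,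
          ‖(if i ∈ Finset.range (m'+1) then a i • x i else 0) - a i • P (x i)‖
            ≤ |a i| * ((2*K+1) * γ i) := by
        intro i _
        by_cases him : i ∈ Finset.range (m'+1)
        · rw [if_pos him]
          have hi' : i ≤ m' := Nat.lt_succ_iff.mp (Finset.mem_range.mp him)
          have h1 : ‖P (x i) - x i‖ ≤ (2*K+1) * γ i :=
            habsorb i 0 (r m') (Nat.zero_le _) (hr_mono.monotone hi')
          calc ‖a i • x i - a i • P (x i)‖ = |a i| * ‖x i - P (x i)‖ := by
                rw [← smul_sub, norm_smul, Real.norm_eq_abs]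
            _ ≤ |a i| * ((2*K+1) * γ i) := by
                rw [norm_sub_rev]
                exact mul_le_mul_of_nonneg_left h1 (abs_nonneg _)
        · rw [if_neg him, zero_sub, norm_neg, norm_smul, Real.norm_eq_abs]
          have hi' : m' < i := by
            have := Finset.mem_range.not.mp him; omega
          have h1 : ‖P (x i)‖ ≤ 2*K * γ i :=
            hannih i 0 (r m') (hrl' m' i hi')
          have h2 : 2*K*γ i ≤ (2*K+1) * γ i := by
            have := (hγpos i).le; nlinarith
          exact mul_le_mul_of_nonneg_left (h1.trans h2) (abs_nonneg _)
      calc ‖∑ i ∈ Finset.range n,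
            ((if i ∈ Finset.range (m'+1) then a i • x i else 0) - a i • P (x i))‖
          ≤ ∑ i ∈ Finset.range n, |a i| * ((2*K+1) * γ i) :=
            (norm_sum_le _ _).trans (Finset.sum_le_sum hterm)
        _ ≤ ∑ i ∈ Finset.range n, (8*K*‖Sn‖) * ((2*K+1) * γ i) := by
            apply Finset.sum_le_sum
            intro i hi
            have := (hγpos i).le
            apply mul_le_mul_of_nonneg_right (hcoeff' i hi) (by positivity)
        _ = ‖Sn‖ * (C * ∑ i ∈ Finset.range n, γ i) := by
            simp only [Finset.mul_sum]
            rw [hCdef]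
            exact Finset.sum_congr rfl fun i _ => by ring
        _ ≤ ‖Sn‖ * (1/2) := mul_le_mul_of_nonneg_left hCGsum hSnnn
        _ = (1/2) * ‖Sn‖ := by ring
    have hfinal : ‖Sm‖ ≤ ‖P Sn‖ + ‖Sm - P Sn‖ := by
      calc ‖Sm‖ = ‖P Sn + (Sm - P Sn)‖ := by rw [add_sub_cancel]
        _ ≤ ‖P Sn‖ + ‖Sm - P Sn‖ := norm_add_le _ _
    nlinarith
  · -- block sequences
    intro z hz
    obtain ⟨p, a, hp, hzdef, hzn⟩ := hz
    have hp1 : ∀ k, p k < p (k+1) := fun k => hp (Nat.lt_succ_self k)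
    have hppos : ∀ k, 0 < p (k+1) := fun k => Nat.lt_of_le_of_lt (Nat.zero_le _) (hp1 k)
    have hpred : ∀ k, p (k+1) - 1 + 1 = p (k+1) := fun k => Nat.succ_pred_eq_of_pos (hppos k)
    have hple : ∀ k, p k ≤ p (k+1) - 1 := fun k => by have := hp1 k; omega
    have hkp : ∀ k, k ≤ p k := fun k => hp.le_apply
    refine ⟨?_, hzn, fun k => l (p k), fun k => r (p (k+1) - 1), ?_, ?_, ?_, ?_, ?_⟩
    · -- membership in E
      intro k
      rw [hzdef]
      exact Submodule.sum_mem E fun i _ => Submodule.smul_mem E _ (hxE i)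
    · -- l' ≤ r'
      intro k
      exact le_trans (hl_mono.monotone (hple k)) (hlr _)
    · -- r' < l' (k+1)
      intro k
      have h := hrl (p (k+1) - 1)
      rwa [hpred k] at h
    · -- error bound
      intro k
      set J := Finset.Icc (l (p k)) (r (p (k+1) - 1)) with hJ
      have hdecomp : d.proj J (z k) - z k
          = ∑ i ∈ Finset.Ico (p k) (p (k+1)), a i • (d.proj J (x i) - x i) := by
        rw [hzdef, map_sum, ← Finset.sum_sub_distrib]
        exact Finset.sum_congr rfl fun i _ => by rw [map_smul, smul_sub]
      have hterm : ∀ i ∈ Finset.Ico (p k) (p (k+1)),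
          ‖a i • (d.proj J (x i) - x i)‖ ≤ (8*K) * ((2*K+1) * γ i) := by
        intro i hi
        obtain ⟨hi1, hi2⟩ := Finset.mem_Ico.mp hi
        have hub : ‖d.proj J (x i) - x i‖ ≤ (2*K+1) * γ i :=
          habsorb i (l (p k)) (r (p (k+1) - 1)) (hl_mono.monotone hi1)
            (hr_mono.monotone (by omega))
        have hai : |a i| ≤ 8*K := by
          have h := hcoeff a (p k) (p (k+1)) i hi
          rw [← hzdef, hzn k, mul_one] at h
          exact h
        rw [norm_smul, Real.norm_eq_abs]
        have h0 : (0:ℝ) ≤ (2*K+1) * γ i := by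
          have := (hγpos i).le; positivity
        exact mul_le_mul hai hub (norm_nonneg _) (by positivity)
      have hGsum := htail (p k) (p (k+1))
      have hsum : ∑ i ∈ Finset.Ico (p k) (p (k+1)), (8*K) * ((2*K+1) * γ i)
          = C * ∑ i ∈ Finset.Ico (p k) (p (k+1)), γ i := by
        simp only [Finset.mul_sum]
        rw [hCdef]
        exact Finset.sum_congr rfl fun i _ => by ring
      have hbound : C * ∑ i ∈ Finset.Ico (p k) (p (k+1)), γ i
          ≤ min (Θ (p k)) 1 * (1/2)^(p k + 1) := by
        have h := mul_le_mul_of_nonneg_left hGsum hCpos.le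
        have hCne : C ≠ 0 := ne_of_gt hCpos
        have heq : C * (min (Θ (p k)) 1 / C * (1/2)^(p k + 1))
            = min (Θ (p k)) 1 * (1/2)^(p k + 1) := by
          rw [← mul_assoc, mul_comm C (min (Θ (p k)) 1 / C), div_mul_cancel₀ _ hCne]
        rwa [heq] at h
      have hlt : min (Θ (p k)) 1 * (1/2)^(p k + 1) < Θ k := by
        have h1 : min (Θ (p k)) 1 ≤ Θ (p k) := min_le_left _ _
        have h2 : ((1:ℝ)/2)^(p k + 1) ≤ 1/2 := by
          calc ((1:ℝ)/2)^(p k + 1) ≤ (1/2)^1 := by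
                apply pow_le_pow_of_le_one (by norm_num) (by norm_num); omega
            _ = 1/2 := by norm_num
        have h3 : Θ (p k) ≤ Θ k := hΘanti (hkp k)
        have h4 := hΘpos (p k)
        have h5 := hminpos (p k)
        calc min (Θ (p k)) 1 * (1/2)^(p k + 1) ≤ Θ (p k) * (1/2) :=
              mul_le_mul h1 h2 (by positivity) (by linarith)
          _ < Θ (p k) := by linarith
          _ ≤ Θ k := h3
      calc ‖d.proj J (z k) - z k‖
          = ‖∑ i ∈ Finset.Ico (p k) (p (k+1)), a i • (d.proj J (x i) - x i)‖ := by
            rw [hdecomp]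
        _ ≤ ∑ i ∈ Finset.Ico (p k) (p (k+1)), (8*K) * ((2*K+1) * γ i) :=
            (norm_sum_le _ _).trans (Finset.sum_le_sum hterm)
        _ = C * ∑ i ∈ Finset.Ico (p k) (p (k+1)), γ i := hsum
        _ ≤ min (Θ (p k)) 1 * (1/2)^(p k + 1) := hbound
        _ < Θ k := hlt
    · -- M 0 < l (p 0)
      exact lt_of_lt_of_le hM0 (hl_mono.monotone (Nat.zero_le _))
    · -- separation
      intro k
      obtain ⟨j, h1, h2⟩ := hsep (p (k+1) - 1)
      rw [hpred k] at h2
      exact ⟨j, h1, h2⟩
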